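/- Let V be a finite set of vertices with open intervals I_v = (L_v,U_v) and weights w_v ∈ I_v, and let S be a hyperedge. If v ∈ S is not a minimum-weight vertex of S but w_u ∈ I_v for the minimum-weight vertex u of S, then every feasible query set for orienting S contains v. -/
import Mathlib


open Finset

/-- Lower endpoint of vertex `v`'s interval after querying the set `Q`. -/
def qlo {V : Type*} [DecidableEq V] (L w : V → ℝ) (Q : Finset V) (v : V) : ℝ :=
  if v ∈ Q then w v else L v

/-- Upper endpoint of vertex `v`'s interval after querying the set `Q`. -/
def qhi {V : Type*} [DecidableEq V] (U w : V → ℝ) (Q : Finset V) (v : V) : ℝ :=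
  if v ∈ Q then w v else U v

/-- The query set `Q` suffices to orient the hyperedge `S`: some vertex of `S`
has its (updated) interval weakly below all other (updated) intervals of `S`. -/
def Solves {V : Type*} [DecidableEq V] (L U w : V → ℝ) (Q : Finset V) (S : Finset V) : Prop :=
  ∃ m ∈ S, ∀ u ∈ S, u ≠ m → qhi U w Q m ≤ qlo L w Q u

theorem stmt1 {V : Type*} [DecidableEq V] (L U w : V → ℝ)
    (hw : ∀ x : V, w x ∈ Set.Ioo (L x) (U x))
    (S : Finset V) (v u : V) (hvS : v ∈ S) (huS : u ∈ S)
    (humin : ∀ x ∈ S, w u ≤ w x)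
    (hvnotmin : w u < w v)
    (hwu : w u ∈ Set.Ioo (L v) (U v)) :
    ∀ Q : Finset V, Solves L U w Q S → v ∈ Q := by
  intro Q ⟨m, hmS, hm⟩
  by_contra hvQ
  by_cases hmv : m = v
  · subst hmv
    have huv : u ≠ m := fun h => absurd hvnotmin (by simp [h])
    have := hm u huS huv
    have h1 : qhi U w Q m = U m := if_neg hvQ
    have h2 : qlo L w Q u ≤ w u := by
      unfold qlo; split
      · exact le_rfl
      · exact (hw u).1.le
    linarith [hwu.2]
  · have := hm v hvS (Ne.symm hmv)
    have h1 : qlo L w Q v = L v := if_neg hvQ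
    have h2 : w m ≤ qhi U w Q m := by
      unfold qhi; split
      · exact le_rfl
      · exact (hw m).2.le
    have := humin m hmS
    linarith [hwu.1]
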